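/- Let E be a real inner product space, τ ≥ 0, L ≥ 0, and f : E → ℝ a τ-weakly convex function that is Lipschitz with constant L. Let μ > 0, x ∈ E, and let y ∈ E be a global minimizer of x' ↦ f(x') + (1/(2μ))‖x' − x‖². Then for every z ∈ E, ‖y − z‖² ≤ ‖x − z‖² − 2μ(f(y) − f(z)) + τμ‖y − z‖² + μ²L². -/

import Mathlib

/-- One-step distance estimate for the incremental proximal point update (eq. (4.8)). -/
theorem proximal_point_step_distance_estimate
    {E : Type*} [NormedAddCommGroup E] [InnerProductSpace ℝ E]
    (τ L : ℝ) (hτ : 0 ≤ τ) (hL : 0 ≤ L) (f : E → ℝ)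
    (hwc : ConvexOn ℝ Set.univ (fun x => f x + τ / 2 * ‖x‖ ^ 2))
    (hlip : ∀ x y : E, |f x - f y| ≤ L * ‖x - y‖)
    (μ : ℝ) (hμ : 0 < μ) (x y : E)
    (hy : ∀ x' : E, f y + 1 / (2 * μ) * ‖y - x‖ ^ 2 ≤ f x' + 1 / (2 * μ) * ‖x' - x‖ ^ 2) :
    ∀ z : E, ‖y - z‖ ^ 2 ≤ ‖x - z‖ ^ 2 - 2 * μ * (f y - f z)
      + τ * μ * ‖y - z‖ ^ 2 + μ ^ 2 * L ^ 2 := by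
  intro z
  set p : ℝ := inner ℝ (y - x) (z - y) with hp
  set N : ℝ := ‖y - z‖^2 with hNN
  have hN0 : 0 ≤ N := by positivity
  have hNrev : ‖z - y‖^2 = N := by rw [hNN, norm_sub_rev]
  -- key inequality for each t ∈ (0,1]
  have key : ∀ t : ℝ, 0 < t → t ≤ 1 →
      μ * (f y - f z) ≤ μ * (τ/2) * N + p + t * (N / 2) := by
    intro t ht ht1
    set w : E := (1-t) • y + t • z with hwdef
    have hconv := hwc.2 (Set.mem_univ y) (Set.mem_univ z)
      (by linarith : (0:ℝ) ≤ 1 - t) (le_of_lt ht) (by ring)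
    simp only [smul_eq_mul] at hconv
    rw [← hwdef] at hconv
    have hmin := hy w
    -- expand norms
    have e1 : ‖w‖^2
        = (1-t)^2 * ‖y‖^2 + 2*(t*(1-t))*(inner ℝ y z : ℝ) + t^2 * ‖z‖^2 := by
      rw [hwdef, ← real_inner_self_eq_norm_sq, ← real_inner_self_eq_norm_sq,
        ← real_inner_self_eq_norm_sq]
      simp only [inner_add_left, inner_add_right, real_inner_smul_left,
        real_inner_smul_right, real_inner_comm y z]
      ring
    have e2 : N = ‖y‖^2 - 2*(inner ℝ y z : ℝ) + ‖z‖^2 := by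
      rw [hNN, ← real_inner_self_eq_norm_sq, ← real_inner_self_eq_norm_sq,
        ← real_inner_self_eq_norm_sq]
      simp only [inner_sub_left, inner_sub_right, real_inner_comm y z]
      ring
    have e3 : ‖w - x‖^2 = ‖y - x‖^2 + 2*t*p + t^2 * N := by
      have hw : w - x = (y - x) + t • (z - y) := by
        rw [hwdef]; module
      rw [hw, norm_add_sq_real, real_inner_smul_right, norm_smul,
        Real.norm_eq_abs, mul_pow, sq_abs, hNrev]
      ring
    rw [e1] at hconv
    rw [e3] at hmin
    -- convexity bound on f w
    have hconv2 : f w ≤ (1-t) * f y + t * f z + τ/2 * (t*(1-t)) * N := by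
      have hring : (1-t)*(f y + τ/2*‖y‖^2) + t*(f z + τ/2*‖z‖^2)
          - τ/2*((1-t)^2*‖y‖^2 + 2*(t*(1-t))*(inner ℝ y z : ℝ) + t^2*‖z‖^2)
          = (1-t)*f y + t*f z
            + τ/2*(t*(1-t))*(‖y‖^2 - 2*(inner ℝ y z : ℝ) + ‖z‖^2) := by ring
      rw [e2]
      linarith [hconv, hring]
    -- minimality bound, multiplied by 2μ
    have hmin' : f y - f w ≤ 1/(2*μ)*(2*t*p + t^2*N) := by
      have hring : (1:ℝ)/(2*μ)*(‖y - x‖^2 + 2*t*p + t^2*N)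
          = 1/(2*μ)*‖y - x‖^2 + 1/(2*μ)*(2*t*p + t^2*N) := by ring
      linarith [hmin, hring]
    have hmin2 : 2*μ*(f y - f w) ≤ 2*t*p + t^2*N := by
      have h1 := mul_le_mul_of_nonneg_left hmin' (by positivity : (0:ℝ) ≤ 2*μ)
      have h2 : 2*μ*(1/(2*μ)*(2*t*p + t^2*N)) = 2*t*p + t^2*N := by
        field_simp
      linarith
    -- combine and divide by t
    have hX : t * (2*μ*(f y - f z) - μ*τ*(1-t)*N - 2*p - t*N) ≤ 0 := by
      have h3 := mul_le_mul_of_nonneg_left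
        (by linarith [hconv2] :
          t*(f y - f z) - τ/2*(t*(1-t))*N ≤ f y - f w)
        (by positivity : (0:ℝ) ≤ 2*μ)
      have hring : 2*μ*(t*(f y - f z) - τ/2*(t*(1-t))*N) - (2*t*p + t^2*N)
          = t * (2*μ*(f y - f z) - μ*τ*(1-t)*N - 2*p - t*N) := by ring
      linarith [h3, hmin2, hring]
    have hX2 : 2*μ*(f y - f z) - μ*τ*(1-t)*N - 2*p - t*N ≤ 0 :=
      le_of_mul_le_mul_left (by linarith : t * (2*μ*(f y - f z) - μ*τ*(1-t)*N - 2*p - t*N) ≤ t * 0) ht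
    have hpos : 0 ≤ μ*τ*t*N := by positivity
    have hring2 : μ*τ*N - μ*τ*(1-t)*N = μ*τ*t*N := by ring
    linarith [hX2, hpos, hring2]
  -- pass to the limit t → 0
  have main : μ * (f y - f z) ≤ μ * (τ/2) * N + p := by
    apply le_of_forall_pos_le_add
    intro ε hε
    set C : ℝ := N / 2 with hC
    have hC0 : 0 ≤ C := by positivity
    set t : ℝ := min 1 (ε / (C+1)) with htdef
    have ht : 0 < t := lt_min one_pos (by positivity)
    have ht1 : t ≤ 1 := min_le_left _ _
    have htC : t * C ≤ ε := by
      have h1 : t ≤ ε / (C+1) := min_le_right _ _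
      have h2 : t * C ≤ (ε/(C+1)) * C := mul_le_mul_of_nonneg_right h1 hC0
      have h3 : (ε/(C+1)) * C ≤ ε := by
        rw [div_mul_eq_mul_div, div_le_iff₀ (by positivity : (0:ℝ) < C+1)]
        nlinarith [hε.le, hC0]
      linarith
    linarith [key t ht ht1]
  -- inner product identity
  have hid : 2 * p = ‖x - z‖^2 - ‖y - x‖^2 - N := by
    rw [hp, hNN, ← real_inner_self_eq_norm_sq, ← real_inner_self_eq_norm_sq,
      ← real_inner_self_eq_norm_sq]
    simp only [inner_sub_left, inner_sub_right, real_inner_comm x y,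
      real_inner_comm x z, real_inner_comm y z]
    ring
  have h1 : (0:ℝ) ≤ ‖y - x‖^2 := by positivity
  have h2 : (0:ℝ) ≤ μ^2 * L^2 := by positivity
  linarith [main, hid]
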